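/- For any quantum channel N ∈ CPTP(A_0→A_1), any ε ∈ [0,1], and any DISC superchannel Θ, the dephasing hypothesis-testing relative entropy of coherence is monotone: C_{H,Δ}^ε(Θ[N]) ≤ C_{H,Δ}^ε(N). -/

import Mathlib

open scoped ComplexOrder

noncomputable section

namespace DynCoh

/-- The space of linear maps from operators on `A` to operators on `B`
(candidate quantum channels). -/
abbrev QChanMap (A B : Type) [Fintype A] [Fintype B] : Type :=
  Matrix A A ℂ →ₗ[ℂ] Matrix B B ℂ

section Basic

variable {A0 A1 B0 B1 : Type} [Fintype A0] [Fintype A1] [Fintype B0] [Fintype B1]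

/-- `id_E ⊗ M` : the extension of a supermap `M` by the identity on a reference system `E`. -/
def extendL (E : Type) [Fintype E] (M : QChanMap A0 A1) :
    QChanMap (E × A0) (E × A1) where
  toFun X := Matrix.of fun p q => M (Matrix.of fun a a' => X (p.1, a) (q.1, a')) p.2 q.2
  map_add' X Y := by
    ext p q
    show M (Matrix.of fun a a' => (X + Y) (p.1, a) (q.1, a')) p.2 q.2 = _
    have h : (Matrix.of fun a a' => (X + Y) (p.1, a) (q.1, a'))
        = (Matrix.of fun a a' => X (p.1, a) (q.1, a'))
          + (Matrix.of fun a a' => Y (p.1, a) (q.1, a')) := rfl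
    rw [h, map_add]
    rfl
  map_smul' c X := by
    ext p q
    show M (Matrix.of fun a a' => (c • X) (p.1, a) (q.1, a')) p.2 q.2 = _
    have h : (Matrix.of fun a a' => (c • X) (p.1, a) (q.1, a'))
        = c • (Matrix.of fun a a' => X (p.1, a) (q.1, a')) := rfl
    rw [h, map_smul]
    rfl

/-- Complete positivity: `id_n ⊗ M` maps positive semidefinite matrices to
positive semidefinite matrices, for every finite reference dimension `n`. -/
def CompletelyPositive (M : QChanMap A0 A1) : Prop :=
  ∀ (n : ℕ) (X : Matrix (Fin n × A0) (Fin n × A0) ℂ),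
    X.PosSemidef → ((extendL (Fin n) M) X).PosSemidef

/-- Trace preservation. -/
def TracePreserving (M : QChanMap A0 A1) : Prop :=
  ∀ X : Matrix A0 A0 ℂ, (M X).trace = X.trace

/-- A quantum channel: a completely positive trace-preserving linear map. -/
def IsCPTP (M : QChanMap A0 A1) : Prop :=
  CompletelyPositive M ∧ TracePreserving M

end Basic

/-- The completely dephasing channel `D(ρ) = Σ_i |i⟩⟨i| ρ |i⟩⟨i|` (in the fixed
incoherent basis). -/
def dephasingMap (A : Type) [Fintype A] [DecidableEq A] : QChanMap A A where
  toFun X := Matrix.of fun i j => if i = j then X i j else 0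
  map_add' X Y := by
    ext i j
    by_cases h : i = j <;> simp [h, Matrix.add_apply]
  map_smul' c X := by
    ext i j
    by_cases h : i = j <;> simp [h, Matrix.smul_apply]

section Deph

variable {A0 A1 B0 B1 : Type} [Fintype A0] [Fintype A1] [Fintype B0] [Fintype B1]

/-- The dephasing superchannel `Δ[N] = D ∘ N ∘ D`. -/
def dephChan [DecidableEq A0] [DecidableEq A1] (N : QChanMap A0 A1) : QChanMap A0 A1 :=
  (dephasingMap A1) ∘ₗ N ∘ₗ (dephasingMap A0)

/-- A classical channel: a quantum channel satisfying `N = D ∘ N ∘ D`. -/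
def IsClassical [DecidableEq A0] [DecidableEq A1] (N : QChanMap A0 A1) : Prop :=
  IsCPTP N ∧ N = dephChan N

end Deph

/-- A superchannel from channels `A0 → A1` to channels `B0 → B1`, given by pre- and
post-processing quantum channels together with a reference (memory) system `Fin E`. -/
structure Superchannel (A0 A1 B0 B1 : Type)
    [Fintype A0] [Fintype A1] [Fintype B0] [Fintype B1] where
  E : ℕ
  pre : QChanMap B0 (Fin E × A0)
  post : QChanMap (Fin E × A1) B1
  pre_cptp : IsCPTP pre
  post_cptp : IsCPTP post

section Super

variable {A0 A1 B0 B1 : Type} [Fintype A0] [Fintype A1] [Fintype B0] [Fintype B1]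

/-- Action of a superchannel on a (candidate) channel: `Θ[N] = Q ∘ (id_E ⊗ N) ∘ P`. -/
def Superchannel.app (Θ : Superchannel A0 A1 B0 B1) (N : QChanMap A0 A1) :
    QChanMap B0 B1 :=
  Θ.post ∘ₗ (extendL (Fin Θ.E) N) ∘ₗ Θ.pre

/-- A maximally incoherent superchannel (MISC): maps every classical channel to a
classical channel. -/
def IsMISC [DecidableEq A0] [DecidableEq A1] [DecidableEq B0] [DecidableEq B1]
    (Θ : Superchannel A0 A1 B0 B1) : Prop :=
  ∀ N : QChanMap A0 A1, IsClassical N → IsClassical (Θ.app N)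

/-- A dephasing-covariant incoherent superchannel (DISC): `Δ ∘ Θ = Θ ∘ Δ`. -/
def IsDISC [DecidableEq A0] [DecidableEq A1] [DecidableEq B0] [DecidableEq B1]
    (Θ : Superchannel A0 A1 B0 B1) : Prop :=
  ∀ N : QChanMap A0 A1, dephChan (Θ.app N) = Θ.app (dephChan N)

end Super

/-- The trace norm `‖X‖₁ = Tr √(Xᴴ X)` of a matrix. -/
def traceNorm {A : Type} [Fintype A] [DecidableEq A] (X : Matrix A A ℂ) : ℝ :=
  (((Matrix.posSemidef_conjTranspose_mul_self X).1.eigenvectorUnitary.1 *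
      Matrix.diagonal ((fun x : ℝ => ((Real.sqrt x : ℝ) : ℂ)) ∘
        (Matrix.posSemidef_conjTranspose_mul_self X).1.eigenvalues) *
      (star (Matrix.posSemidef_conjTranspose_mul_self X).1.eigenvectorUnitary :
        Matrix A A ℂ)).trace).re

/-- A density matrix (state): positive semidefinite with unit trace. -/
def IsState {A : Type} [Fintype A] (ρ : Matrix A A ℂ) : Prop :=
  ρ.PosSemidef ∧ ρ.trace = 1

/-- A pure state: a rank-one projector, i.e. a state which is idempotent. -/
def IsPureState {A : Type} [Fintype A] (ρ : Matrix A A ℂ) : Prop :=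
  IsState ρ ∧ ρ * ρ = ρ

section Norms

variable {A0 A1 : Type} [Fintype A0] [Fintype A1] [DecidableEq A1]

/-- The diamond norm `‖X‖◇ = sup_ρ ‖(id_R ⊗ X)(ρ)‖₁`, the supremum running over all
finite reference systems `R` and all states `ρ` on `R ⊗ A0`. -/
def diamondNorm (X : QChanMap A0 A1) : ℝ :=
  ⨆ (n : ℕ), ⨆ ρ : {ρ : Matrix (Fin n × A0) (Fin n × A0) ℂ // IsState ρ},
    traceNorm ((extendL (Fin n) X) ρ.1)

end Norms

/-- Max-relative entropy of states: `D_max(ρ‖σ) = log₂ min{λ ≥ 0 : λσ - ρ ⪰ 0}`. -/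
def DmaxState {A : Type} [Fintype A] (ρ σ : Matrix A A ℂ) : ℝ :=
  Real.logb 2 (sInf {lam : ℝ | 0 ≤ lam ∧ ((lam : ℂ) • σ - ρ).PosSemidef})

section Entropies

variable {A0 A1 : Type} [Fintype A0] [Fintype A1]

/-- Max-relative entropy of channels:
`D̂_max(N‖M) = log₂ min{λ ≥ 0 : λM - N is completely positive}`. -/
def Dmax (N M : QChanMap A0 A1) : ℝ :=
  Real.logb 2 (sInf {lam : ℝ | 0 ≤ lam ∧ CompletelyPositive ((lam : ℂ) • M - N)})

variable [DecidableEq A0] [DecidableEq A1]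

/-- Log-robustness of coherence of a channel: `L̂R(N) = min_{M classical} D̂_max(N‖M)`. -/
def logRob (N : QChanMap A0 A1) : ℝ :=
  sInf {x : ℝ | ∃ M : QChanMap A0 A1, IsClassical M ∧ x = Dmax N M}

/-- Smoothed log-robustness of coherence:
`L̂R_ε(N) = min{L̂R(N') : N' a channel with ½‖N - N'‖◇ ≤ ε}`. -/
def logRobS (ε : ℝ) (N : QChanMap A0 A1) : ℝ :=
  sInf {x : ℝ | ∃ N' : QChanMap A0 A1,
    IsCPTP N' ∧ (1/2) * diamondNorm (N - N') ≤ ε ∧ x = logRob N'}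

/-- Dephasing log-robustness of coherence: `L̂R_Δ(N) = D̂_max(N‖Δ[N])`. -/
def logRobD (N : QChanMap A0 A1) : ℝ :=
  Dmax N (dephChan N)

/-- Smoothed dephasing log-robustness of coherence:
`L̂R_{ε,Δ}(N) = min{D̂_max(N'‖Δ[N']) : N' a channel with ½‖N - N'‖◇ ≤ ε}`. -/
def logRobDS (ε : ℝ) (N : QChanMap A0 A1) : ℝ :=
  sInf {x : ℝ | ∃ N' : QChanMap A0 A1,
    IsCPTP N' ∧ (1/2) * diamondNorm (N - N') ≤ ε ∧ x = logRobD N'}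

end Entropies

/-- The unitary conjugation channel `ρ ↦ U ρ Uᴴ`. -/
def conjChan {A : Type} [Fintype A] (U : Matrix A A ℂ) : QChanMap A A where
  toFun ρ := U * ρ * U.conjTranspose
  map_add' X Y := by simp [Matrix.mul_add, Matrix.add_mul]
  map_smul' c X := by simp [Matrix.mul_smul, Matrix.smul_mul]

/-- The quantum Fourier transform unitary
`F_d = (1/√d) Σ_{j,k} e^{2πijk/d} |j⟩⟨k|`. -/
def QFTmat (d : ℕ) : Matrix (Fin d) (Fin d) ℂ :=
  Matrix.of fun j k =>
    (((Real.sqrt d : ℝ) : ℂ))⁻¹ *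
      Complex.exp (2 * Real.pi * Complex.I * (j : ℕ) * (k : ℕ) / d)

/-- The quantum Fourier transform channel `F_d(ρ) = F_d ρ F_d†`. -/
def QFTChan (d : ℕ) : QChanMap (Fin d) (Fin d) :=
  conjChan (QFTmat d)

/-- The maximally coherent state `ψ_d⁺ = (1/d) Σ_{j,k} |j⟩⟨k|`. -/
def maxCohState (d : ℕ) : Matrix (Fin d) (Fin d) ℂ :=
  Matrix.of fun _ _ => (d : ℂ)⁻¹

/-- The maximal replacement channel `R_d(ρ) = Tr(ρ) ψ_d⁺`. -/
def replChan (d : ℕ) : QChanMap (Fin d) (Fin d) where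
  toFun ρ := ρ.trace • maxCohState d
  map_add' X Y := by simp [Matrix.trace_add, add_smul]
  map_smul' c X := by simp [Matrix.trace_smul, smul_smul]

/-- The normalized Choi matrix `J^N = (id ⊗ N)(φ⁺)`, with entries
`J^N_{(i,k),(j,l)} = (1/|A0|) N(|i⟩⟨j|)_{k,l}`. -/
def choi {A0 A1 : Type} [Fintype A0] [Fintype A1] [DecidableEq A0]
    (N : QChanMap A0 A1) : Matrix (A0 × A1) (A0 × A1) ℂ :=
  Matrix.of fun p q =>
    (Fintype.card A0 : ℂ)⁻¹ * N (Matrix.single p.1 q.1 1) p.2 q.2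

/-- Hypothesis-testing relative entropy of states:
`H_ε(ρ‖σ) = -log₂ min{Tr[Pσ] : 0 ≤ P ≤ I, Tr[Pρ] ≥ 1-ε}`. -/
def Hent (ε : ℝ) {A : Type} [Fintype A] [DecidableEq A] (ρ σ : Matrix A A ℂ) : ℝ :=
  - Real.logb 2 (sInf {x : ℝ | ∃ P : Matrix A A ℂ,
      P.PosSemidef ∧ ((1 : Matrix A A ℂ) - P).PosSemidef ∧
      1 - ε ≤ ((P * ρ).trace).re ∧ x = ((P * σ).trace).re})

section HypTest

variable {A0 A1 : Type} [Fintype A0] [Fintype A1] [DecidableEq A1]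

/-- The hypothesis-testing channel divergence
`Ĥ_ε(N‖M) = max_ψ H_ε((id⊗N)(ψ)‖(id⊗M)(ψ))`, the maximum running over all pure states
on a reference system tensored with the input. -/
def HentChan (ε : ℝ) (N M : QChanMap A0 A1) : ℝ :=
  ⨆ (n : ℕ), ⨆ ψ : {ρ : Matrix (Fin n × A0) (Fin n × A0) ℂ // IsPureState ρ},
    Hent ε ((extendL (Fin n) N) ψ.1) ((extendL (Fin n) M) ψ.1)

variable [DecidableEq A0]

/-- The hypothesis-testing relative entropy of coherence
`C_H^ε(N) = min_{M classical} Ĥ_ε(N‖M)`. -/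
def CH (ε : ℝ) (N : QChanMap A0 A1) : ℝ :=
  sInf {x : ℝ | ∃ M : QChanMap A0 A1, IsClassical M ∧ x = HentChan ε N M}

/-- The dephasing hypothesis-testing relative entropy of coherence
`C_{H,Δ}^ε(N) = Ĥ_ε(N‖Δ[N])`. -/
def CHD (ε : ℝ) (N : QChanMap A0 A1) : ℝ :=
  HentChan ε N (dephChan N)

end HypTest

section Rob

variable {A0 A1 B0 B1 : Type} [Fintype A0] [Fintype A1] [Fintype B0] [Fintype B1]
variable [DecidableEq A0] [DecidableEq A1] [DecidableEq B0] [DecidableEq B1]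

/-- Robustness of coherence of a channel:
`Ĉ_R(N) = min{s ≥ 0 : (N + sM)/(1+s) is classical for some channel M}`. -/
def robC (N : QChanMap A0 A1) : ℝ :=
  sInf {s : ℝ | 0 ≤ s ∧ ∃ M : QChanMap A0 A1, IsCPTP M ∧
    IsClassical ((((1 + s : ℝ) : ℂ))⁻¹ • (N + ((s : ℝ) : ℂ) • M))}

/-- A `δ`-MISC superchannel: `Ĉ_R(Θ[N]) ≤ δ` for every classical channel `N`. -/
def IsDeltaMISC (δ : ℝ) (Θ : Superchannel A0 A1 B0 B1) : Prop :=
  ∀ N : QChanMap A0 A1, IsClassical N → robC (Θ.app N) ≤ δ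

end Rob

section Tensor

variable {A0 A1 B0 B1 : Type} [Fintype A0] [Fintype A1] [Fintype B0] [Fintype B1]
variable [DecidableEq A0] [DecidableEq B0]

/-- The tensor product `N ⊗ M` of two (candidate) channels. -/
def tensorChan (N : QChanMap A0 A1) (M : QChanMap B0 B1) :
    QChanMap (A0 × B0) (A1 × B1) where
  toFun X := Matrix.of fun p q =>
    ∑ a : A0, ∑ a' : A0, ∑ b : B0, ∑ b' : B0,
      X (a, b) (a', b') *
        (N (Matrix.single a a' 1) p.1 q.1 *
          M (Matrix.single b b' 1) p.2 q.2)
  map_add' X Y := by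
    ext p q
    simp [Matrix.add_apply, add_mul, Finset.sum_add_distrib]
  map_smul' c X := by
    ext p q
    simp [Matrix.smul_apply, smul_eq_mul, mul_assoc, Finset.mul_sum]

/-- The `n`-fold tensor power `N^{⊗n}` of a (candidate) channel. -/
def powChan (n : ℕ) (N : QChanMap A0 A1) :
    QChanMap (Fin n → A0) (Fin n → A1) where
  toFun X := Matrix.of fun f g =>
    ∑ h : Fin n → A0, ∑ h' : Fin n → A0,
      X h h' * ∏ i : Fin n, N (Matrix.single (h i) (h' i) 1) (f i) (g i)
  map_add' X Y := by
    ext f g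
    simp [Matrix.add_apply, add_mul, Finset.sum_add_distrib]
  map_smul' c X := by
    ext f g
    simp [Matrix.smul_apply, smul_eq_mul, mul_assoc, Finset.mul_sum]

end Tensor

section Tasks

variable {B0 B1 : Type} [Fintype B0] [Fintype B1] [DecidableEq B0] [DecidableEq B1]

/-- One-shot dynamic coherence cost under MISC superchannels:
`c¹_{ε,MISC}(N) = min{log₂ d² : ½‖N - Θ[F_d]‖◇ ≤ ε for some MISC Θ}`. -/
def costMISC (ε : ℝ) (N : QChanMap B0 B1) : ℝ :=
  sInf {x : ℝ | ∃ d : ℕ, ∃ Θ : Superchannel (Fin d) (Fin d) B0 B1, IsMISC Θ ∧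
    (1/2) * diamondNorm (N - Θ.app (QFTChan d)) ≤ ε ∧ x = Real.logb 2 ((d : ℝ)^2)}

/-- One-shot dynamic coherence cost under DISC superchannels. -/
def costDISC (ε : ℝ) (N : QChanMap B0 B1) : ℝ :=
  sInf {x : ℝ | ∃ d : ℕ, ∃ Θ : Superchannel (Fin d) (Fin d) B0 B1, IsDISC Θ ∧
    (1/2) * diamondNorm (N - Θ.app (QFTChan d)) ≤ ε ∧ x = Real.logb 2 ((d : ℝ)^2)}

/-- One-shot dynamic coherence distillation under MISC superchannels:
`d¹_{ε,MISC}(N) = max{log₂ d² : ½‖Θ[N] - F_d‖◇ ≤ ε for some MISC Θ}`. -/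
def distillMISC (ε : ℝ) (N : QChanMap B0 B1) : ℝ :=
  sSup {x : ℝ | ∃ d : ℕ, ∃ Θ : Superchannel B0 B1 (Fin d) (Fin d), IsMISC Θ ∧
    (1/2) * diamondNorm (Θ.app N - QFTChan d) ≤ ε ∧ x = Real.logb 2 ((d : ℝ)^2)}

/-- One-shot dynamic coherence distillation under DISC superchannels. -/
def distillDISC (ε : ℝ) (N : QChanMap B0 B1) : ℝ :=
  sSup {x : ℝ | ∃ d : ℕ, ∃ Θ : Superchannel B0 B1 (Fin d) (Fin d), IsDISC Θ ∧
    (1/2) * diamondNorm (Θ.app N - QFTChan d) ≤ ε ∧ x = Real.logb 2 ((d : ℝ)^2)}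

/-- Regularized smoothed coherence cost under MISC:
`c^∞_{MISC}(N) = lim_{ε→0⁺} lim_{n→∞} (1/n) c¹_{ε,MISC}(N^{⊗n})`. -/
def costRegMISC (N : QChanMap B0 B1) : ℝ :=
  Filter.limUnder (nhdsWithin (0 : ℝ) (Set.Ioi 0)) fun ε : ℝ =>
    Filter.limUnder Filter.atTop fun n : ℕ => (n : ℝ)⁻¹ * costMISC ε (powChan n N)

/-- Regularized smoothed coherence cost under DISC. -/
def costRegDISC (N : QChanMap B0 B1) : ℝ :=
  Filter.limUnder (nhdsWithin (0 : ℝ) (Set.Ioi 0)) fun ε : ℝ =>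
    Filter.limUnder Filter.atTop fun n : ℕ => (n : ℝ)⁻¹ * costDISC ε (powChan n N)

/-- Asymptotic log-robustness:
`L̂R^∞(N) = lim_{ε→0⁺} liminf_{n→∞} (1/n) L̂R_ε(N^{⊗n})`. -/
def logRobReg (N : QChanMap B0 B1) : ℝ :=
  Filter.limUnder (nhdsWithin (0 : ℝ) (Set.Ioi 0)) fun ε : ℝ =>
    Filter.liminf (fun n : ℕ => (n : ℝ)⁻¹ * logRobS ε (powChan n N)) Filter.atTop

/-- Asymptotic dephasing log-robustness. -/
def logRobDReg (N : QChanMap B0 B1) : ℝ :=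
  Filter.limUnder (nhdsWithin (0 : ℝ) (Set.Ioi 0)) fun ε : ℝ =>
    Filter.liminf (fun n : ℕ => (n : ℝ)⁻¹ * logRobDS ε (powChan n N)) Filter.atTop

end Tasks

section Catalytic

variable {a0 a1 : ℕ}

/-- One-shot catalytic dynamic coherence cost under `δ`-MISC superchannels:
the least `log₂ d²` such that a `δ`-MISC superchannel converts `F_d ⊗ F_l`
(for some catalyst dimension `l`) exactly into `N' ⊗ F_l` with `½‖N' - N‖◇ ≤ ε`. -/
def catCost (ε δ : ℝ) (N : QChanMap (Fin a0) (Fin a1)) : ℝ :=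
  sInf {x : ℝ | ∃ d l : ℕ,
    ∃ Θ : Superchannel (Fin d × Fin l) (Fin d × Fin l) (Fin a0 × Fin l) (Fin a1 × Fin l),
    ∃ N' : QChanMap (Fin a0) (Fin a1), IsCPTP N' ∧
      IsDeltaMISC δ Θ ∧
      Θ.app (tensorChan (QFTChan d) (QFTChan l)) = tensorChan N' (QFTChan l) ∧
      (1/2) * diamondNorm (N' - N) ≤ ε ∧ x = Real.logb 2 ((d : ℝ)^2)}

end Catalytic


section Aux
set_option linter.unusedSectionVars false

variable {A0 A1 A2 : Type} [Fintype A0] [Fintype A1] [Fintype A2]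

lemma extendL_apply (E : Type) [Fintype E] (M : QChanMap A0 A1)
    (X : Matrix (E × A0) (E × A0) ℂ) (p q : E × A1) :
    extendL E M X p q = M (Matrix.of fun a a' => X (p.1, a) (q.1, a')) p.2 q.2 := rfl

lemma extendL_comp (E : Type) [Fintype E] (F : QChanMap A1 A2) (G : QChanMap A0 A1)
    (X : Matrix (E × A0) (E × A0) ℂ) :
    extendL E (F ∘ₗ G) X = extendL E F (extendL E G X) := by
  ext p q
  have h : (Matrix.of fun a a' => extendL E G X (p.1, a) (q.1, a'))
      = G (Matrix.of fun a a' => X (p.1, a) (q.1, a')) := by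
    ext a a'
    rfl
  simp only [extendL_apply, h, LinearMap.comp_apply]
  rfl

lemma tp_extendL (E : Type) [Fintype E] {M : QChanMap A0 A1} (hM : TracePreserving M) :
    TracePreserving (extendL E M) := by
  intro X
  simp only [Matrix.trace, Matrix.diag]
  rw [Fintype.sum_prod_type, Fintype.sum_prod_type]
  refine Finset.sum_congr rfl fun e _ => ?_
  have h := hM (Matrix.of fun a a' => X (e, a) (e, a'))
  simpa [Matrix.trace, Matrix.diag, extendL_apply] using h

lemma cp_extend {M : QChanMap A0 A1} (hM : CompletelyPositive M) (R : Type) [Fintype R]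
    {X : Matrix (R × A0) (R × A0) ℂ} (hX : X.PosSemidef) : (extendL R M X).PosSemidef := by
  classical
  let e := Fintype.equivFin R
  set X' : Matrix (Fin (Fintype.card R) × A0) (Fin (Fintype.card R) × A0) ℂ :=
    X.submatrix (fun p => (e.symm p.1, p.2)) (fun p => (e.symm p.1, p.2)) with hX'def
  have hX' : X'.PosSemidef := hX.submatrix _
  have h := hM (Fintype.card R) X' hX'
  have key : extendL R M X
      = (extendL (Fin (Fintype.card R)) M X').submatrix
          (fun p => (e p.1, p.2)) (fun p => (e p.1, p.2)) := by
    ext p q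
    have hb : (Matrix.of fun (a a' : A0) => X' ((e p.1), a) ((e q.1), a'))
        = Matrix.of fun (a a' : A0) => X (p.1, a) (q.1, a') := by
      ext a a'
      simp [hX'def]
    simp only [extendL_apply, Matrix.submatrix_apply]
    rw [hb]
  rw [key]
  exact h.submatrix _

lemma extendL_extendL (R S : Type) [Fintype R] [Fintype S] (M : QChanMap A0 A1)
    (X : Matrix (R × (S × A0)) (R × (S × A0)) ℂ) :
    extendL R (extendL S M) X
      = (extendL (R × S) M
          (X.submatrix (fun p => (p.1.1, (p.1.2, p.2))) (fun p => (p.1.1, (p.1.2, p.2))))).submatrix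
          (fun p => ((p.1, p.2.1), p.2.2)) (fun p => ((p.1, p.2.1), p.2.2)) := by
  ext p q
  simp only [extendL_apply, Matrix.submatrix_apply, Matrix.of_apply]

lemma cp_extendL {M : QChanMap A0 A1} (hM : CompletelyPositive M) (S : Type) [Fintype S] :
    CompletelyPositive (extendL S M) := by
  intro n X hX
  rw [extendL_extendL]
  exact ((cp_extend hM (Fin n × S) (hX.submatrix _)).submatrix _)

lemma cp_comp {F : QChanMap A1 A2} {G : QChanMap A0 A1}
    (hF : CompletelyPositive F) (hG : CompletelyPositive G) :
    CompletelyPositive (F ∘ₗ G) := by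
  intro n X hX
  rw [extendL_comp]
  exact hF n _ (hG n X hX)

lemma tp_comp {F : QChanMap A1 A2} {G : QChanMap A0 A1}
    (hF : TracePreserving F) (hG : TracePreserving G) : TracePreserving (F ∘ₗ G) := by
  intro X
  rw [LinearMap.comp_apply, hF, hG]

lemma pos_of_cp {M : QChanMap A0 A1} (hM : CompletelyPositive M)
    {X : Matrix A0 A0 ℂ} (hX : X.PosSemidef) : (M X).PosSemidef := by
  have h := hM 1 (X.submatrix Prod.snd Prod.snd) (hX.submatrix _)
  have key : M X = (extendL (Fin 1) M (X.submatrix Prod.snd Prod.snd)).submatrix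
      (fun a => ((0 : Fin 1), a)) (fun a => ((0 : Fin 1), a)) := by
    ext a a'
    have hb : (Matrix.of fun (b b' : A0) =>
          (X.submatrix Prod.snd Prod.snd) (((0 : Fin 1), a).1, b) (((0 : Fin 1), a').1, b')) = X := by
      ext b b'
      simp
    simp only [Matrix.submatrix_apply, extendL_apply]
    rw [show (Matrix.of fun (a a' : A0) => X a a') = X from rfl]
  rw [key]
  exact h.submatrix _

end Aux
section Aux2
set_option linter.unusedSectionVars false

variable {R S T G A : Type} [Fintype R] [Fintype S] [Fintype T] [Fintype G] [Fintype A]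
variable [DecidableEq R] [DecidableEq S] [DecidableEq T] [DecidableEq G] [DecidableEq A]

lemma psd_sum_nonneg {ι : Type} (s : Finset ι) (f : ι → Matrix S S ℂ)
    (h : ∀ i ∈ s, (f i).PosSemidef) : (∑ i ∈ s, f i).PosSemidef := by
  classical
  induction s using Finset.induction with
  | empty => simpa using Matrix.PosSemidef.zero
  | insert _ _ hni ih =>
    rw [Finset.sum_insert hni]
    exact ((h _ (Finset.mem_insert_self _ _)).add
      (ih fun i hi => h i (Finset.mem_insert_of_mem hi)))

lemma psd_smul_nat {d : ℕ} {X : Matrix S S ℂ} (hX : X.PosSemidef) :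
    (((d : ℂ)) • X).PosSemidef := by
  refine Matrix.PosSemidef.of_dotProduct_mulVec_nonneg ?_ ?_
  · ext p q
    simp only [Matrix.conjTranspose_apply, Matrix.smul_apply, smul_eq_mul, star_mul', star_natCast]
    rw [hX.1.apply]
  · intro x
    have h := hX.dotProduct_mulVec_nonneg x
    have hd : 0 ≤ (d : ℂ) := by
      rw [Complex.le_def]
      simp
    rw [Matrix.smul_mulVec, dotProduct_smul, smul_eq_mul]
    exact mul_nonneg hd h

lemma trace_nonneg_of_psd {X : Matrix S S ℂ} (hX : X.PosSemidef) : 0 ≤ X.trace := by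
  classical
  rw [Matrix.trace]
  refine Finset.sum_nonneg fun i _ => ?_
  have h := hX.dotProduct_mulVec_nonneg (Pi.single i 1)
  simpa [dotProduct, Matrix.mulVec, Pi.single_apply] using h

section SqrtAux
open scoped MatrixOrder

lemma psd_exists_sqrt {X : Matrix S S ℂ} (hX : X.PosSemidef) :
    ∃ C : Matrix S S ℂ, C.PosSemidef ∧ C.conjTranspose = C ∧ C * C = X :=
  ⟨CFC.sqrt X, Matrix.nonneg_iff_posSemidef.mp (CFC.sqrt_nonneg X),
    (Matrix.nonneg_iff_posSemidef.mp (CFC.sqrt_nonneg X)).1,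
    CFC.sqrt_mul_sqrt_self X hX.nonneg⟩

end SqrtAux

lemma trace_mul_psd_nonneg {P Q : Matrix S S ℂ} (hP : P.PosSemidef) (hQ : Q.PosSemidef) :
    0 ≤ (P * Q).trace := by
  classical
  obtain ⟨W, hC, -, hsq⟩ := psd_exists_sqrt hQ
  have h1 : P * Q = P * W * W := by rw [Matrix.mul_assoc, hsq]
  have h2 : (P * Q).trace = (W * P * W).trace := by
    rw [h1, Matrix.trace_mul_comm, Matrix.mul_assoc]
  rw [h2]
  have hpsd := hP.mul_mul_conjTranspose_same W
  rw [hC.1] at hpsd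
  exact trace_nonneg_of_psd hpsd

lemma trace_re_mul_psd_nonneg {P Q : Matrix S S ℂ} (hP : P.PosSemidef) (hQ : Q.PosSemidef) :
    0 ≤ ((P * Q).trace).re := by
  have h := trace_mul_psd_nonneg hP hQ
  rw [Complex.le_def] at h
  simpa using h.1

/-- The relabeling channel along an equivalence. -/
def myReindex (e : S ≃ T) : QChanMap S T where
  toFun X := X.submatrix (fun t => e.symm t) (fun t => e.symm t)
  map_add' X Y := by ext p q; simp
  map_smul' c X := by ext p q; simp

lemma myReindex_apply (e : S ≃ T) (X : Matrix S S ℂ) (p q : T) :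
    myReindex e X p q = X (e.symm p) (e.symm q) := rfl

lemma cp_myReindex (e : S ≃ T) :
    CompletelyPositive (myReindex e) := by
  intro n X hX
  have key : extendL (Fin n) (myReindex e) X
      = X.submatrix (fun p => (p.1, e.symm p.2)) (fun p => (p.1, e.symm p.2)) := by
    ext p q; rfl
  rw [key]
  exact hX.submatrix _

lemma tp_myReindex (e : S ≃ T) : TracePreserving (myReindex e) := by
  intro X
  show (X.submatrix _ _).trace = X.trace
  simp only [Matrix.trace, Matrix.diag, Matrix.submatrix_apply]
  exact Equiv.sum_comp e.symm (fun s => X s s)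

lemma cptp_myReindex (e : S ≃ T) : IsCPTP (myReindex e) :=
  ⟨cp_myReindex e, tp_myReindex e⟩

/-- The partial trace channel over `G`. -/
def ptraceMap (G S : Type) [Fintype G] [Fintype S] : QChanMap (G × S) S where
  toFun X := Matrix.of fun s s' => ∑ g : G, X (g, s) (g, s')
  map_add' X Y := by ext s s'; simp [Finset.sum_add_distrib]
  map_smul' c X := by ext s s'; simp [Finset.mul_sum]

lemma ptraceMap_apply (X : Matrix (G × S) (G × S) ℂ) (s s' : S) :
    ptraceMap G S X s s' = ∑ g : G, X (g, s) (g, s') := rfl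

/-- selector matrix for partial trace PSD proof -/
private def selG (g : G) : Matrix (R × S) (R × (G × S)) ℂ :=
  Matrix.of fun p u => if u = (p.1, (g, p.2)) then (1 : ℂ) else 0

lemma psd_sum_middle (X : Matrix (R × (G × S)) (R × (G × S)) ℂ) (hX : X.PosSemidef) :
    (Matrix.of fun (p q : R × S) => ∑ g : G, X (p.1, (g, p.2)) (q.1, (g, q.2))).PosSemidef := by
  classical
  have key : (Matrix.of fun (p q : R × S) => ∑ g : G, X (p.1, (g, p.2)) (q.1, (g, q.2)))
      = ∑ g : G, (selG (R := R) (S := S) g) * X * (selG (R := R) (S := S) g).conjTranspose := by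
    ext p q
    rw [Matrix.sum_apply]
    refine Finset.sum_congr rfl fun g _ => ?_
    simp only [Matrix.mul_apply, Matrix.conjTranspose_apply, selG, Matrix.of_apply]
    simp [Finset.sum_ite_eq, Finset.sum_ite_eq', apply_ite, Finset.mul_sum, Finset.sum_mul]
  rw [key]
  exact psd_sum_nonneg _ _ fun g _ => hX.mul_mul_conjTranspose_same _

lemma cp_ptraceMap : CompletelyPositive (ptraceMap G S) := by
  intro n X hX
  have key : extendL (Fin n) (ptraceMap G S) X
      = Matrix.of fun (p q : Fin n × S) => ∑ g : G, X (p.1, (g, p.2)) (q.1, (g, q.2)) := by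
    ext p q; rfl
  rw [key]
  exact psd_sum_middle X hX

lemma tp_ptraceMap : TracePreserving (ptraceMap G S) := by
  intro X
  simp only [Matrix.trace, Matrix.diag, ptraceMap, LinearMap.coe_mk, AddHom.coe_mk,
    Matrix.of_apply]
  rw [Fintype.sum_prod_type]
  exact Finset.sum_comm

lemma cptp_ptraceMap : IsCPTP (ptraceMap G S) := ⟨cp_ptraceMap, tp_ptraceMap⟩

end Aux2
section Aux3
set_option linter.unusedSectionVars false
set_option maxHeartbeats 1000000

variable {R A S : Type} [Fintype R] [Fintype A] [Fintype S]
variable [DecidableEq R] [DecidableEq A] [DecidableEq S]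

lemma extendL_dephasing_apply (X : Matrix (R × A) (R × A) ℂ) (p q : R × A) :
    extendL R (dephasingMap A) X p q = if p.2 = q.2 then X p q else 0 := rfl

/-- splitting of a vector according to the second index -/
private def ysplit (x : R × A → ℂ) (i : A) : R × A → ℂ := fun u => if u.2 = i then x u else 0

lemma ysplit_sum (x : R × A → ℂ) (v : R × A) : ∑ i : A, ysplit x i v = x v := by
  simp [ysplit]

lemma pinch_dot (X : Matrix (R × A) (R × A) ℂ) (x : R × A → ℂ) :
    dotProduct (star x) ((extendL R (dephasingMap A) X).mulVec x)
      = ∑ i : A, dotProduct (star (ysplit x i)) (X.mulVec (ysplit x i)) := by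
  have hterm : ∀ i : A, dotProduct (star (ysplit x i)) (X.mulVec (ysplit x i))
      = ∑ u : R × A, ∑ v : R × A,
          (if u.2 = i then star (x u) else 0) * (X u v * (if v.2 = i then x v else 0)) := by
    intro i
    simp only [dotProduct, Matrix.mulVec, Pi.star_apply, ysplit, Finset.mul_sum]
    refine Finset.sum_congr rfl fun u _ => Finset.sum_congr rfl fun v _ => ?_
    by_cases h1 : u.2 = i <;> by_cases h2 : v.2 = i <;> simp [h1, h2]
  have hR : ∀ (u v : R × A), (∑ i : A,
        (if u.2 = i then star (x u) else 0) * (X u v * (if v.2 = i then x v else 0)))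
      = (if u.2 = v.2 then star (x u) * (X u v * x v) else 0) := by
    intro u v
    by_cases h : u.2 = v.2
    · have hsingle := Finset.sum_eq_single (s := Finset.univ)
        (f := fun i => (if u.2 = i then star (x u) else 0)
          * (X u v * (if v.2 = i then x v else 0))) u.2
        (fun i _ hi => by simp [Ne.symm hi])
        (fun habs => absurd (Finset.mem_univ _) habs)
      rw [hsingle]
      simp [h]
    · rw [if_neg h]
      refine Finset.sum_eq_zero fun i _ => ?_
      rcases eq_or_ne u.2 i with h1 | h1
      · have h2 : v.2 ≠ i := fun hv => h (h1.trans hv.symm)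
        simp [h2]
      · simp [h1]
  calc dotProduct (star x) ((extendL R (dephasingMap A) X).mulVec x)
      = ∑ u : R × A, ∑ v : R × A,
          (if u.2 = v.2 then star (x u) * (X u v * x v) else 0) := by
        simp only [dotProduct, Matrix.mulVec, Pi.star_apply, extendL_dephasing_apply,
          Finset.mul_sum]
        refine Finset.sum_congr rfl fun u _ => Finset.sum_congr rfl fun v _ => ?_
        by_cases h : u.2 = v.2 <;> simp [h]
    _ = ∑ u : R × A, ∑ v : R × A, ∑ i : A,
          (if u.2 = i then star (x u) else 0) * (X u v * (if v.2 = i then x v else 0)) :=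
        Finset.sum_congr rfl fun u _ => Finset.sum_congr rfl fun v _ => (hR u v).symm
    _ = ∑ u : R × A, ∑ i : A, ∑ v : R × A,
          (if u.2 = i then star (x u) else 0) * (X u v * (if v.2 = i then x v else 0)) :=
        Finset.sum_congr rfl fun u _ => Finset.sum_comm
    _ = ∑ i : A, ∑ u : R × A, ∑ v : R × A,
          (if u.2 = i then star (x u) else 0) * (X u v * (if v.2 = i then x v else 0)) :=
        Finset.sum_comm
    _ = ∑ i : A, dotProduct (star (ysplit x i)) (X.mulVec (ysplit x i)) :=
        Finset.sum_congr rfl fun i _ => (hterm i).symm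

lemma pinch_psd {X : Matrix (R × A) (R × A) ℂ} (hX : X.PosSemidef) :
    (extendL R (dephasingMap A) X).PosSemidef := by
  refine Matrix.PosSemidef.of_dotProduct_mulVec_nonneg ?_ ?_
  · ext p q
    simp only [Matrix.conjTranspose_apply, extendL_dephasing_apply]
    by_cases h : p.2 = q.2
    · rw [if_pos h, if_pos h.symm]
      exact hX.1.apply p q
    · rw [if_neg (Ne.symm h), if_neg h, star_zero]
  · intro x
    rw [pinch_dot]
    exact Finset.sum_nonneg fun i _ => hX.dotProduct_mulVec_nonneg _

lemma cp_dephasingMap : CompletelyPositive (dephasingMap A) := fun _ _ hX => pinch_psd hX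

lemma tp_dephasingMap : TracePreserving (dephasingMap A) := by
  intro X
  simp [dephasingMap, Matrix.trace, Matrix.diag]

lemma cptp_dephasingMap : IsCPTP (dephasingMap A) := ⟨cp_dephasingMap, tp_dephasingMap⟩

lemma pinch_dom {X : Matrix (R × A) (R × A) ℂ} (hX : X.PosSemidef) :
    (((Fintype.card A : ℂ)) • extendL R (dephasingMap A) X - X).PosSemidef := by
  have hP := pinch_psd hX
  obtain ⟨C, hCH, hCC⟩ : ∃ C : Matrix (R × A) (R × A) ℂ,
      C.conjTranspose = C ∧ C * C = X := by
    obtain ⟨W, -, hW1, hW2⟩ := psd_exists_sqrt hX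
    exact ⟨W, hW1, hW2⟩
  refine Matrix.PosSemidef.of_dotProduct_mulVec_nonneg ?_ ?_
  · exact ((psd_smul_nat hP).1).sub hX.1
  · intro x
    have hq := hX.dotProduct_mulVec_nonneg x
    have hp := hP.dotProduct_mulVec_nonneg x
    rw [Complex.le_def] at hq hp
    have hexp : dotProduct (star x)
          (((((Fintype.card A : ℂ)) • extendL R (dephasingMap A) X - X)).mulVec x)
        = (Fintype.card A : ℂ) * dotProduct (star x)
            ((extendL R (dephasingMap A) X).mulVec x)
          - dotProduct (star x) (X.mulVec x) := by
      rw [Matrix.sub_mulVec, dotProduct_sub, Matrix.smul_mulVec,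
        dotProduct_smul, smul_eq_mul]
    rw [hexp]
    have hq1 : ∀ v : R × A → ℂ, dotProduct (star v) (X.mulVec v)
        = dotProduct (star (C.mulVec v)) (C.mulVec v) := by
      intro v
      have hstar : star (C.mulVec v) = Matrix.vecMul (star v) C := by
        rw [Matrix.star_mulVec, hCH]
      rw [← hCC, ← Matrix.mulVec_mulVec, Matrix.dotProduct_mulVec, hstar]
    have hmv : C.mulVec x = ∑ i : A, C.mulVec (ysplit x i) := by
      funext u
      rw [Finset.sum_apply]
      simp only [Matrix.mulVec, dotProduct]
      rw [Finset.sum_comm]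
      refine Finset.sum_congr rfl fun v _ => ?_
      rw [← Finset.mul_sum]
      congr 1
      exact (ysplit_sum x v).symm
    let V : A → EuclideanSpace ℂ (R × A) := fun i => WithLp.toLp 2 (C.mulVec (ysplit x i))
    let F : EuclideanSpace ℂ (R × A) := WithLp.toLp 2 (C.mulVec x)
    have hF : F = ∑ i : A, V i := by simp only [F, V, hmv, WithLp.toLp_sum]
    have hdot_inner : ∀ v w : R × A → ℂ,
        dotProduct (star v) w
          = (inner (𝕜 := ℂ) (WithLp.toLp 2 v : EuclideanSpace ℂ (R × A))
              (WithLp.toLp 2 w : EuclideanSpace ℂ (R × A))) := by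
      intro v w
      simp [PiLp.inner_apply, dotProduct, mul_comm, PiLp.toLp_apply]
    have hnormF : (dotProduct (star x) (X.mulVec x)).re = ‖F‖ ^ 2 := by
      rw [hq1 x, hdot_inner (C.mulVec x) (C.mulVec x)]
      have := inner_self_eq_norm_sq (𝕜 := ℂ) F
      simpa using this
    have hnormV : ∀ i : A, (dotProduct (star (ysplit x i)) (X.mulVec (ysplit x i))).re
        = ‖V i‖ ^ 2 := by
      intro i
      rw [hq1 _, hdot_inner]
      have := inner_self_eq_norm_sq (𝕜 := ℂ) (V i)
      simpa using this
    have hptot : (dotProduct (star x)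
          ((extendL R (dephasingMap A) X).mulVec x)).re
        = ∑ i : A, ‖V i‖ ^ 2 := by
      rw [pinch_dot, Complex.re_sum]
      exact Finset.sum_congr rfl fun i _ => hnormV i
    have hkey : (dotProduct (star x) (X.mulVec x)).re
        ≤ (Fintype.card A : ℝ) * ∑ i : A, ‖V i‖ ^ 2 := by
      rw [hnormF]
      calc ‖F‖ ^ 2 ≤ (∑ i : A, ‖V i‖) ^ 2 := by
            have h1 : ‖F‖ ≤ ∑ i : A, ‖V i‖ := by
              rw [hF]
              exact norm_sum_le _ _
            exact pow_le_pow_left₀ (norm_nonneg F) h1 2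
        _ ≤ (Finset.univ.card : ℝ) * ∑ i : A, ‖V i‖ ^ 2 :=
            sq_sum_le_card_mul_sum_sq
        _ = (Fintype.card A : ℝ) * ∑ i : A, ‖V i‖ ^ 2 := by
            rw [Finset.card_univ]
    rw [Complex.le_def]
    have hcre : ((Fintype.card A : ℂ)).re = (Fintype.card A : ℝ) := by simp
    have hcim : ((Fintype.card A : ℂ)).im = 0 := by simp
    have hqim : (dotProduct (star x) (X.mulVec x)).im = 0 := by
      simpa using hq.2.symm
    have hpim : (dotProduct (star x)
        ((extendL R (dephasingMap A) X).mulVec x)).im = 0 := by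
      simpa using hp.2.symm
    constructor
    · simp only [Complex.zero_re, Complex.sub_re, Complex.mul_re, hcre, hcim, hqim, hpim,
        zero_mul, mul_zero, sub_zero]
      rw [hptot]
      linarith [hkey]
    · simp only [Complex.zero_im, Complex.sub_im, Complex.mul_im, hcre, hcim, hqim, hpim,
        zero_mul, mul_zero, add_zero]
      ring

end Aux3
section Aux4
set_option linter.unusedSectionVars false
set_option maxHeartbeats 1000000

variable {S T : Type} [Fintype S] [Fintype T] [DecidableEq S] [DecidableEq T]

lemma psd_vecMulVec (u : S → ℂ) : (Matrix.vecMulVec u (star u)).PosSemidef := by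
  refine Matrix.PosSemidef.of_dotProduct_mulVec_nonneg ?_ ?_
  · ext i j
    simp only [Matrix.conjTranspose_apply, Matrix.vecMulVec_apply, Pi.star_apply, star_mul',
      star_star]
    ring
  · intro x
    have key : dotProduct (star x) ((Matrix.vecMulVec u (star u)).mulVec x)
        = star (dotProduct (star u) x) * (dotProduct (star u) x) := by
      simp only [dotProduct, Matrix.mulVec, Matrix.vecMulVec_apply, Pi.star_apply,
        star_sum, star_mul', star_star, Finset.sum_mul, Finset.mul_sum]
      rw [Finset.sum_comm]
      refine Finset.sum_congr rfl fun j _ => Finset.sum_congr rfl fun k _ => by ring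
    rw [key]
    exact star_mul_self_nonneg _

lemma isPureState_vecMulVec {u : S → ℂ} (hu : dotProduct (star u) u = 1) :
    IsPureState (Matrix.vecMulVec u (star u)) := by
  have htr : (Matrix.vecMulVec u (star u)).trace = 1 := by
    rw [← hu]
    simp only [Matrix.trace, Matrix.diag, Matrix.vecMulVec_apply, dotProduct,
      Pi.star_apply]
    exact Finset.sum_congr rfl fun i _ => by ring
  refine ⟨⟨psd_vecMulVec u, htr⟩, ?_⟩
  ext i j
  rw [Matrix.mul_apply]
  have : ∀ k, Matrix.vecMulVec u (star u) i k * Matrix.vecMulVec u (star u) k j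
      = (u i * star (u j)) * (star (u k) * u k) := by
    intro k
    simp only [Matrix.vecMulVec_apply, Pi.star_apply]
    ring
  rw [Finset.sum_congr rfl fun k _ => this k, ← Finset.mul_sum]
  have : ∑ k, star (u k) * u k = 1 := hu
  rw [this, mul_one]
  rfl

lemma dot_eq_trace (M : Matrix S S ℂ) (x : S → ℂ) :
    dotProduct (star x) (M.mulVec x)
      = (M * Matrix.vecMulVec x (star x)).trace := by
  simp only [dotProduct, Matrix.mulVec, Matrix.trace, Matrix.diag, Matrix.mul_apply,
    Matrix.vecMulVec_apply, Pi.star_apply, Finset.mul_sum]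
  refine Finset.sum_congr rfl fun i _ => Finset.sum_congr rfl fun j _ => by ring

lemma dot_conjTranspose (A : Matrix S S ℂ) (x : S → ℂ) :
    dotProduct (star x) ((A.conjTranspose).mulVec x)
      = star (dotProduct (star x) (A.mulVec x)) := by
  simp only [dotProduct, Matrix.mulVec, Matrix.conjTranspose_apply, Pi.star_apply,
    star_sum, star_mul', star_star, Finset.mul_sum]
  rw [Finset.sum_comm]
  refine Finset.sum_congr rfl fun i _ => Finset.sum_congr rfl fun j _ => by ring

/-- The (trace-pairing) adjoint of a channel candidate. -/
def adjMap (Λ : QChanMap S T) (P : Matrix T T ℂ) : Matrix S S ℂ :=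
  Matrix.of fun s s' => (P * Λ (Matrix.single s' s 1)).trace

lemma adj_trace (Λ : QChanMap S T) (P : Matrix T T ℂ) (ρ : Matrix S S ℂ) :
    ((adjMap Λ P) * ρ).trace = (P * Λ ρ).trace := by
  have hρ2 : ρ = ∑ i : S, ∑ j : S, (ρ i j) • Matrix.single i j (1 : ℂ) := by
    conv_lhs => rw [Matrix.matrix_eq_sum_single ρ]
    refine Finset.sum_congr rfl fun i _ => Finset.sum_congr rfl fun j _ => ?_
    rw [Matrix.smul_single, smul_eq_mul, mul_one]
  have hL : (ρ * adjMap Λ P).trace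
      = ∑ i : S, ∑ j : S, ρ i j * (P * Λ (Matrix.single i j 1)).trace := by
    rw [Matrix.trace]
    simp only [Matrix.diag, Matrix.mul_apply, adjMap, Matrix.of_apply]
  rw [Matrix.trace_mul_comm, hL]
  conv_rhs => rw [hρ2]
  simp only [map_sum, map_smul, Matrix.mul_sum, Matrix.trace_sum, Matrix.mul_smul,
    Matrix.trace_smul, smul_eq_mul]

lemma adj_one {Λ : QChanMap S T} (hTP : TracePreserving Λ) : adjMap Λ 1 = 1 := by
  ext s s'
  show ((1 : Matrix T T ℂ) * Λ (Matrix.single s' s 1)).trace = (1 : Matrix S S ℂ) s s'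
  rw [one_mul, hTP]
  simp only [Matrix.trace, Matrix.diag, Matrix.single, Matrix.of_apply, Matrix.one_apply]
  by_cases h : s' = s
  · subst h
    simp
  · rw [if_neg (Ne.symm h)]
    refine Finset.sum_eq_zero fun k _ => ?_
    rw [if_neg]
    rintro ⟨h1, h2⟩
    exact h (h1.trans h2.symm)

lemma adj_sub (Λ : QChanMap S T) (P Q : Matrix T T ℂ) :
    adjMap Λ (P - Q) = adjMap Λ P - adjMap Λ Q := by
  ext s s'
  show ((P - Q) * _).trace = _
  rw [Matrix.sub_mul, Matrix.trace_sub]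
  rfl

/-- Hermitized adjoint. -/
def hadj (Λ : QChanMap S T) (P : Matrix T T ℂ) : Matrix S S ℂ :=
  ((2 : ℂ))⁻¹ • (adjMap Λ P + (adjMap Λ P).conjTranspose)

lemma hadj_herm (Λ : QChanMap S T) (P : Matrix T T ℂ) : (hadj Λ P).IsHermitian := by
  show _ = _
  rw [hadj, Matrix.conjTranspose_smul, Matrix.conjTranspose_add,
    Matrix.conjTranspose_conjTranspose, add_comm]
  congr 1
  simp

lemma hadj_dot (Λ : QChanMap S T) (P : Matrix T T ℂ) (x : S → ℂ) :
    dotProduct (star x) ((hadj Λ P).mulVec x)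
      = (((P * Λ (Matrix.vecMulVec x (star x))).trace).re : ℂ) := by
  have hq : dotProduct (star x) ((adjMap Λ P).mulVec x)
      = (P * Λ (Matrix.vecMulVec x (star x))).trace := by
    rw [dot_eq_trace, adj_trace]
  rw [hadj, Matrix.smul_mulVec, dotProduct_smul, Matrix.add_mulVec,
    dotProduct_add, dot_conjTranspose, hq]
  rw [smul_eq_mul]
  set t := (P * Λ (Matrix.vecMulVec x (star x))).trace
  rw [show star t = (starRingEnd ℂ) t from rfl, Complex.add_conj]
  push_cast
  ring

lemma hadj_psd {Λ : QChanMap S T} (hpos : ∀ X : Matrix S S ℂ, X.PosSemidef → (Λ X).PosSemidef)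
    {P : Matrix T T ℂ} (hP : P.PosSemidef) : (hadj Λ P).PosSemidef := by
  refine Matrix.PosSemidef.of_dotProduct_mulVec_nonneg (hadj_herm Λ P) fun x => ?_
  rw [hadj_dot]
  have h := trace_mul_psd_nonneg hP (hpos _ (psd_vecMulVec x))
  rw [Complex.le_def] at h
  rw [Complex.le_def]
  constructor
  · simpa using h.1
  · simp

lemma hadj_one {Λ : QChanMap S T} (hTP : TracePreserving Λ) : hadj Λ 1 = 1 := by
  rw [hadj, adj_one hTP, Matrix.conjTranspose_one]
  ext i j
  simp only [Matrix.smul_apply, Matrix.add_apply, smul_eq_mul]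
  ring

lemma hadj_one_sub {Λ : QChanMap S T} (hTP : TracePreserving Λ) (P : Matrix T T ℂ) :
    hadj Λ (1 - P) = 1 - hadj Λ P := by
  rw [hadj, adj_sub, adj_one hTP, Matrix.conjTranspose_sub, Matrix.conjTranspose_one]
  rw [show hadj Λ P = ((2 : ℂ))⁻¹ • (adjMap Λ P + (adjMap Λ P).conjTranspose) from rfl]
  ext i j
  simp only [Matrix.smul_apply, Matrix.add_apply, Matrix.sub_apply, Matrix.one_apply,
    smul_eq_mul]
  ring

lemma trace_conjTranspose_mul (A ρ : Matrix S S ℂ) (hρ : ρ.IsHermitian) :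
    ((A.conjTranspose) * ρ).trace = star ((A * ρ).trace) := by
  simp only [Matrix.trace, Matrix.diag, Matrix.mul_apply, Matrix.conjTranspose_apply,
    star_sum, star_mul']
  rw [Finset.sum_comm]
  refine Finset.sum_congr rfl fun i _ => Finset.sum_congr rfl fun j _ => ?_
  rw [← hρ.apply j i, star_star]

lemma hadj_trace_re (Λ : QChanMap S T) (P : Matrix T T ℂ) {ρ : Matrix S S ℂ}
    (hρ : ρ.IsHermitian) :
    (((hadj Λ P) * ρ).trace).re = ((P * Λ ρ).trace).re := by
  rw [hadj, Matrix.smul_mul, Matrix.add_mul, Matrix.trace_smul, Matrix.trace_add,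
    trace_conjTranspose_mul _ _ hρ, adj_trace]
  rw [smul_eq_mul, show star ((P * Λ ρ).trace) = (starRingEnd ℂ) ((P * Λ ρ).trace) from rfl,
    Complex.add_conj, Complex.ofReal_mul]
  simp

end Aux4
section Aux5
set_option linter.unusedSectionVars false
set_option maxHeartbeats 1000000

variable {S T : Type} [Fintype S] [Fintype T] [DecidableEq S] [DecidableEq T]

def testSet (ε : ℝ) (ρ σ : Matrix S S ℂ) : Set ℝ :=
  {x : ℝ | ∃ P : Matrix S S ℂ,
      P.PosSemidef ∧ ((1 : Matrix S S ℂ) - P).PosSemidef ∧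
      1 - ε ≤ ((P * ρ).trace).re ∧ x = ((P * σ).trace).re}

lemma Hent_eq (ε : ℝ) (ρ σ : Matrix S S ℂ) :
    Hent ε ρ σ = - Real.logb 2 (sInf (testSet ε ρ σ)) := rfl

lemma testSet_nonneg {ε : ℝ} {ρ σ : Matrix S S ℂ} (hσ : σ.PosSemidef) :
    ∀ x ∈ testSet ε ρ σ, 0 ≤ x := by
  rintro x ⟨P, hP, h1P, hcond, rfl⟩
  exact trace_re_mul_psd_nonneg hP hσ

lemma one_mem_testSet {ε : ℝ} (hε : 0 ≤ ε) {ρ σ : Matrix S S ℂ}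
    (hρ : ρ.trace = 1) (hσ : σ.trace = 1) : (1 : ℝ) ∈ testSet ε ρ σ := by
  refine ⟨1, Matrix.PosSemidef.one, ?_, ?_, ?_⟩
  · rw [sub_self]
    exact Matrix.PosSemidef.zero
  · rw [one_mul, hρ]
    simp only [Complex.one_re]
    linarith
  · rw [one_mul, hσ, Complex.one_re]

lemma testSet_lb {ε lam : ℝ} (hlam : 0 < lam) {ρ σ : Matrix S S ℂ}
    (hdom : (((lam : ℂ)) • σ - ρ).PosSemidef) :
    ∀ x ∈ testSet ε ρ σ, (1 - ε) / lam ≤ x := by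
  rintro x ⟨P, hP, h1P, hcond, rfl⟩
  have h0 := trace_re_mul_psd_nonneg hP hdom
  have hexp : (P * (((lam : ℂ)) • σ - ρ)).trace
      = (lam : ℂ) * (P * σ).trace - (P * ρ).trace := by
    rw [Matrix.mul_sub, Matrix.trace_sub, Matrix.mul_smul, Matrix.trace_smul, smul_eq_mul]
  rw [hexp] at h0
  have hkey : 0 ≤ lam * ((P * σ).trace).re - ((P * ρ).trace).re := by
    simpa [Complex.sub_re, Complex.mul_re, Complex.ofReal_re, Complex.ofReal_im] using h0
  rw [div_le_iff₀ hlam, mul_comm]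
  linarith

lemma testSet_subset {Λ : QChanMap S T} (hCP : CompletelyPositive Λ) (hTP : TracePreserving Λ)
    {ρ σ : Matrix S S ℂ} (hρ : ρ.IsHermitian) (hσ : σ.IsHermitian) (ε : ℝ) :
    testSet ε (Λ ρ) (Λ σ) ⊆ testSet ε ρ σ := by
  rintro x ⟨P, hP, h1P, hcond, rfl⟩
  have hpos : ∀ X : Matrix S S ℂ, X.PosSemidef → (Λ X).PosSemidef :=
    fun X hX => pos_of_cp hCP hX
  refine ⟨hadj Λ P, hadj_psd hpos hP, ?_, ?_, ?_⟩
  · rw [← hadj_one_sub hTP]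
    exact hadj_psd hpos h1P
  · rw [hadj_trace_re Λ P hρ]
    exact hcond
  · rw [hadj_trace_re Λ P hσ]

lemma hent_mono {Λ : QChanMap S T} (hCP : CompletelyPositive Λ) (hTP : TracePreserving Λ)
    {ρ σ : Matrix S S ℂ} (hρ : ρ.PosSemidef) (hρt : ρ.trace = 1) (hσ : σ.PosSemidef)
    (hσt : σ.trace = 1) {ε c : ℝ} (hε : 0 ≤ ε) (hc : 0 < c)
    (hlb : ∀ x ∈ testSet ε ρ σ, c ≤ x) :
    Hent ε (Λ ρ) (Λ σ) ≤ Hent ε ρ σ := by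
  rw [Hent_eq, Hent_eq]
  have hsub := testSet_subset hCP hTP hρ.1 hσ.1 ε
  have hne_out : (testSet ε (Λ ρ) (Λ σ)).Nonempty :=
    ⟨1, one_mem_testSet hε (by rw [hTP, hρt]) (by rw [hTP, hσt])⟩
  have hne_in : (testSet ε ρ σ).Nonempty := ⟨1, one_mem_testSet hε hρt hσt⟩
  have hbdd_in : BddBelow (testSet ε ρ σ) := ⟨c, fun x hx => hlb x hx⟩
  have h1 : sInf (testSet ε ρ σ) ≤ sInf (testSet ε (Λ ρ) (Λ σ)) :=
    csInf_le_csInf hbdd_in hne_out hsub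
  have h2 : c ≤ sInf (testSet ε ρ σ) := le_csInf hne_in hlb
  exact neg_le_neg (Real.logb_le_logb_of_le (by norm_num) (lt_of_lt_of_le hc h2) h1)

lemma hent_le_bound {ε lam : ℝ} (hε : 0 ≤ ε) (hε1 : ε < 1) (hlam : 0 < lam)
    {ρ σ : Matrix S S ℂ} (hρt : ρ.trace = 1) (hσt : σ.trace = 1)
    (hdom : (((lam : ℂ)) • σ - ρ).PosSemidef) :
    Hent ε ρ σ ≤ - Real.logb 2 ((1 - ε) / lam) := by
  rw [Hent_eq]
  apply neg_le_neg
  have hc : 0 < (1 - ε) / lam := div_pos (by linarith) hlam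
  have h2 : (1 - ε) / lam ≤ sInf (testSet ε ρ σ) :=
    le_csInf ⟨1, one_mem_testSet hε hρt hσt⟩ (testSet_lb hlam hdom)
  exact Real.logb_le_logb_of_le (by norm_num) hc h2

lemma hent_nonneg {ε : ℝ} (hε : 0 ≤ ε) {ρ σ : Matrix S S ℂ} (hσ : σ.PosSemidef)
    (hρt : ρ.trace = 1) (hσt : σ.trace = 1) : 0 ≤ Hent ε ρ σ := by
  rw [Hent_eq, neg_nonneg]
  have hmem := one_mem_testSet hε hρt hσt
  have h1 : sInf (testSet ε ρ σ) ≤ 1 :=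
    csInf_le ⟨0, testSet_nonneg hσ⟩ hmem
  rcases lt_or_ge 0 (sInf (testSet ε ρ σ)) with h | h
  · calc Real.logb 2 (sInf (testSet ε ρ σ)) ≤ Real.logb 2 1 :=
        Real.logb_le_logb_of_le (by norm_num) h h1
      _ = 0 := Real.logb_one
  · have h0 : 0 ≤ sInf (testSet ε ρ σ) := le_csInf ⟨1, hmem⟩ (testSet_nonneg hσ)
    rw [le_antisymm h h0, Real.logb_zero]

lemma hent_eps_one {ρ σ : Matrix S S ℂ} (hσ : σ.PosSemidef) : Hent 1 ρ σ = 0 := by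
  rw [Hent_eq]
  have h0 : (0 : ℝ) ∈ testSet 1 ρ σ := by
    refine ⟨0, Matrix.PosSemidef.zero, ?_, ?_, ?_⟩
    · rw [sub_zero]
      exact Matrix.PosSemidef.one
    · simp
    · simp
  have : sInf (testSet 1 ρ σ) = 0 := le_antisymm (csInf_le ⟨0, testSet_nonneg hσ⟩ h0)
      (le_csInf ⟨0, h0⟩ (testSet_nonneg hσ))
  rw [this, Real.logb_zero, neg_zero]

end Aux5
section Aux6
set_option linter.unusedSectionVars false
set_option maxHeartbeats 2000000

variable {A0 A1 B0 B1 : Type} [Fintype A0] [Fintype A1] [Fintype B0] [Fintype B1]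
variable [DecidableEq A0] [DecidableEq A1] [DecidableEq B0] [DecidableEq B1]

lemma dom_deph {N : QChanMap A0 A1} (hN : CompletelyPositive N) (R : Type) [Fintype R]
    [DecidableEq R] {Ψ : Matrix (R × A0) (R × A0) ℂ} (hΨ : Ψ.PosSemidef) :
    ((((Fintype.card A0 : ℂ)) * ((Fintype.card A1 : ℂ))) • extendL R (dephChan N) Ψ
      - extendL R N Ψ).PosSemidef := by
  have hrest : (((Fintype.card A0 : ℂ)) • extendL R (dephasingMap A0) Ψ - Ψ).PosSemidef :=
    pinch_dom hΨ
  have hY : (extendL R N Ψ).PosSemidef := cp_extend hN R hΨ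
  have hY2 : (extendL R N
      (((Fintype.card A0 : ℂ)) • extendL R (dephasingMap A0) Ψ - Ψ)).PosSemidef :=
    cp_extend hN R hrest
  have hd : extendL R (dephChan N) Ψ
      = extendL R (dephasingMap A1) (extendL R N (extendL R (dephasingMap A0) Ψ)) := by
    rw [dephChan, extendL_comp, extendL_comp]
  have key : (((Fintype.card A0 : ℂ)) * ((Fintype.card A1 : ℂ))) • extendL R (dephChan N) Ψ
        - extendL R N Ψ
      = (((Fintype.card A1 : ℂ)) • extendL R (dephasingMap A1) (extendL R N Ψ)
          - extendL R N Ψ)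
        + ((Fintype.card A1 : ℂ)) • extendL R (dephasingMap A1)
            (extendL R N
              (((Fintype.card A0 : ℂ)) • extendL R (dephasingMap A0) Ψ - Ψ)) := by
    rw [hd, map_sub, map_smul, map_sub, map_smul]
    module
  rw [key]
  exact (pinch_dom hY).add (psd_smul_nat (pinch_psd hY2))

/-- Purification of a state. -/
lemma purify {S : Type} [Fintype S] [DecidableEq S] {ω : Matrix S S ℂ}
    (hω : ω.PosSemidef) (hωtr : ω.trace = 1) :
    ∃ u : S × S → ℂ, (dotProduct (star u) u = 1) ∧
      (∀ s s' : S, ∑ g : S, u (g, s) * star (u (g, s')) = ω s s') := by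
  classical
  obtain ⟨W, -, hWH, hWW⟩ := psd_exists_sqrt hω
  have hWentry : ∀ (s g : S), W g s = star (W s g) := by
    intro s g
    rw [← Matrix.conjTranspose_apply, hWH]
  refine ⟨fun p => W p.2 p.1, ?_, ?_⟩
  · have htrW : ω.trace = ∑ s : S, ∑ g : S, W s g * star (W s g) := by
      rw [show ω.trace = (W * W).trace from (congrArg Matrix.trace hWW).symm,
        Matrix.trace]
      simp only [Matrix.diag, Matrix.mul_apply]
      exact Finset.sum_congr rfl fun s _ => Finset.sum_congr rfl fun g _ => by
        rw [hWentry s g]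
    have hsum : dotProduct (star (fun p : S × S => W p.2 p.1))
          (fun p : S × S => W p.2 p.1)
        = ∑ g : S, ∑ s : S, star (W s g) * W s g := by
      simp only [dotProduct, Pi.star_apply]
      rw [Fintype.sum_prod_type]
    rw [hsum, Finset.sum_comm, ← hωtr, htrW]
    exact Finset.sum_congr rfl fun s _ => Finset.sum_congr rfl fun g _ => mul_comm _ _
  · intro s s'
    have hterm : ∀ g : S, W s g * star (W s' g)
        = W s g * W g s' := by
      intro g
      rw [hWentry s' g]
    calc ∑ g : S, W s g * star (W s' g)
        = ∑ g : S, W s g * W g s' := Finset.sum_congr rfl fun g _ => hterm g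
      _ = (W * W) s s' := (Matrix.mul_apply).symm
      _ = ω s s' := by rw [hWW]

/-- Stinespring-type dilation of the action of a superchannel on extended states. -/
lemma superchannel_dilation (Θ : Superchannel A0 A1 B0 B1) (n : ℕ)
    {ψ : Matrix (Fin n × B0) (Fin n × B0) ℂ} (hψ : IsPureState ψ) :
    ∃ (m : ℕ) (Ψ' : Matrix (Fin m × A0) (Fin m × A0) ℂ)
      (Λ : QChanMap (Fin m × A1) (Fin n × B1)),
      IsPureState Ψ' ∧ CompletelyPositive Λ ∧ TracePreserving Λ ∧
      ∀ M : QChanMap A0 A1, Λ (extendL (Fin m) M Ψ') = extendL (Fin n) (Θ.app M) ψ := by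
  classical
  have hω₀psd : (extendL (Fin n) Θ.pre ψ).PosSemidef := Θ.pre_cptp.1 n ψ hψ.1.1
  have hω₀tr : (extendL (Fin n) Θ.pre ψ).trace = 1 := by
    rw [tp_extendL (Fin n) Θ.pre_cptp.2 ψ, hψ.1.2]
  set pa := Equiv.prodAssoc (Fin n) (Fin Θ.E) A0 with hpa
  set ω : Matrix (((Fin n × Fin Θ.E) × A0)) (((Fin n × Fin Θ.E) × A0)) ℂ :=
    (extendL (Fin n) Θ.pre ψ).submatrix pa pa with hωdef
  have hωpsd : ω.PosSemidef := hω₀psd.submatrix _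
  have hωtr : ω.trace = 1 := by
    rw [hωdef, ← hω₀tr]
    simp only [Matrix.trace, Matrix.diag, Matrix.submatrix_apply]
    exact Equiv.sum_comp pa (fun s => extendL (Fin n) Θ.pre ψ s s)
  obtain ⟨u₀, hu₀unit, hu₀sum⟩ := purify hωpsd hωtr
  -- reshape the purification vector
  set u : (((((Fin n × Fin Θ.E) × A0)) × (Fin n × Fin Θ.E)) × A0) → ℂ :=
    fun p => u₀ (p.1.1, (p.1.2, p.2)) with hudef
  have hunit : dotProduct (star u) u = 1 := by
    rw [← hu₀unit]
    simp only [dotProduct, Pi.star_apply]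
    exact Fintype.sum_equiv (Equiv.prodAssoc ((Fin n × Fin Θ.E) × A0) (Fin n × Fin Θ.E) A0)
      (fun p => star (u p) * u p) (fun p => star (u₀ p) * u₀ p) (fun p => rfl)
  -- relabel the reference system as Fin m
  set m := Fintype.card ((((Fin n × Fin Θ.E) × A0)) × (Fin n × Fin Θ.E)) with hm
  set e := Fintype.equivFin ((((Fin n × Fin Θ.E) × A0)) × (Fin n × Fin Θ.E)) with he
  set u' : Fin m × A0 → ℂ := fun p => u (e.symm p.1, p.2) with hu'def
  have hunit' : dotProduct (star u') u' = 1 := by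
    rw [← hunit]
    simp only [dotProduct, Pi.star_apply]
    exact Fintype.sum_equiv (Equiv.prodCongr e.symm (Equiv.refl A0))
      (fun p => star (u' p) * u' p) (fun p => star (u p) * u p) (fun p => rfl)
  have hpure' : IsPureState (Matrix.vecMulVec u' (star u')) := isPureState_vecMulVec hunit'
  set E4 : (Fin m × A1) ≃ (((((Fin n × Fin Θ.E) × A0)) × (Fin n × Fin Θ.E)) × A1) :=
    Equiv.prodCongr e.symm (Equiv.refl A1) with hE4
  set E5 : (((((Fin n × Fin Θ.E) × A0)) × (Fin n × Fin Θ.E)) × A1)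
      ≃ ((((Fin n × Fin Θ.E) × A0)) × ((Fin n × Fin Θ.E) × A1)) :=
    Equiv.prodAssoc ((Fin n × Fin Θ.E) × A0) (Fin n × Fin Θ.E) A1 with hE5
  set E6 : ((Fin n × Fin Θ.E) × A1) ≃ (Fin n × (Fin Θ.E × A1)) :=
    Equiv.prodAssoc (Fin n) (Fin Θ.E) A1 with hE6
  refine ⟨m, Matrix.vecMulVec u' (star u'),
    (extendL (Fin n) Θ.post) ∘ₗ (myReindex E6)
      ∘ₗ (ptraceMap ((Fin n × Fin Θ.E) × A0) ((Fin n × Fin Θ.E) × A1))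
      ∘ₗ (myReindex E5) ∘ₗ (myReindex E4), hpure', ?_, ?_, ?_⟩
  · exact cp_comp (cp_extendL Θ.post_cptp.1 (Fin n)) (cp_comp (cp_myReindex E6)
      (cp_comp cp_ptraceMap (cp_comp (cp_myReindex E5) (cp_myReindex E4))))
  · exact tp_comp (tp_extendL (Fin n) Θ.post_cptp.2) (tp_comp (tp_myReindex E6)
      (tp_comp tp_ptraceMap (tp_comp (tp_myReindex E5) (tp_myReindex E4))))
  · intro M
    have hC0 : myReindex E4 (extendL (Fin m) M (Matrix.vecMulVec u' (star u')))
        = extendL (((((Fin n × Fin Θ.E) × A0)) × (Fin n × Fin Θ.E))) M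
            (Matrix.vecMulVec u (star u)) := by
      ext p q
      rw [myReindex_apply, extendL_apply, extendL_apply]
      have hb : (Matrix.of fun a a' => Matrix.vecMulVec u' (star u')
            ((E4.symm p).1, a) ((E4.symm q).1, a'))
          = (Matrix.of fun a a' => Matrix.vecMulVec u (star u) (p.1, a) (q.1, a')) := by
        ext a a'
        show u' (e p.1, a) * star (u' (e q.1, a')) = u (p.1, a) * star (u (q.1, a'))
        rw [hu'def]
        simp
      rw [hb]
      rfl
    have hblocks : ∀ (k k' : Fin n × Fin Θ.E), (∑ g : ((Fin n × Fin Θ.E) × A0),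
          Matrix.of fun (a a' : A0) =>
            Matrix.vecMulVec u (star u) ((g, k), a) ((g, k'), a'))
        = Matrix.of fun (a a' : A0) => ω (k, a) (k', a') := by
      intro k k'
      ext a a'
      rw [Matrix.sum_apply]
      have hterm : ∀ g : ((Fin n × Fin Θ.E) × A0), (Matrix.of fun (a a' : A0) =>
            Matrix.vecMulVec u (star u) ((g, k), a) ((g, k'), a')) a a'
          = u₀ (g, (k, a)) * star (u₀ (g, (k', a'))) := fun g => rfl
      rw [Finset.sum_congr rfl fun g _ => hterm g]
      exact hu₀sum (k, a) (k', a')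
    have hC1 : ptraceMap ((Fin n × Fin Θ.E) × A0) ((Fin n × Fin Θ.E) × A1)
          (myReindex E5 (extendL (((((Fin n × Fin Θ.E) × A0)) × (Fin n × Fin Θ.E))) M
            (Matrix.vecMulVec u (star u))))
        = extendL (Fin n × Fin Θ.E) M ω := by
      ext p q
      rw [ptraceMap_apply, extendL_apply]
      have hterm : ∀ g : ((Fin n × Fin Θ.E) × A0),
          myReindex E5 (extendL (((((Fin n × Fin Θ.E) × A0)) × (Fin n × Fin Θ.E))) M
            (Matrix.vecMulVec u (star u))) (g, p) (g, q)
          = (M (Matrix.of fun (a a' : A0) =>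
              Matrix.vecMulVec u (star u) ((g, p.1), a) ((g, q.1), a'))) p.2 q.2 :=
        fun g => rfl
      rw [Finset.sum_congr rfl fun g _ => hterm g]
      calc ∑ g : ((Fin n × Fin Θ.E) × A0), (M (Matrix.of fun (a a' : A0) =>
              Matrix.vecMulVec u (star u) ((g, p.1), a) ((g, q.1), a'))) p.2 q.2
          = (∑ g : ((Fin n × Fin Θ.E) × A0), M (Matrix.of fun (a a' : A0) =>
              Matrix.vecMulVec u (star u) ((g, p.1), a) ((g, q.1), a'))) p.2 q.2 := by
            rw [Matrix.sum_apply]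
        _ = (M (∑ g : ((Fin n × Fin Θ.E) × A0), Matrix.of fun (a a' : A0) =>
              Matrix.vecMulVec u (star u) ((g, p.1), a) ((g, q.1), a'))) p.2 q.2 := by
            rw [map_sum]
        _ = (M (Matrix.of fun (a a' : A0) => ω (p.1, a) (q.1, a'))) p.2 q.2 := by
            rw [hblocks p.1 q.1]
    have hC2 : myReindex E6 (extendL (Fin n × Fin Θ.E) M ω)
        = extendL (Fin n) (extendL (Fin Θ.E) M) (extendL (Fin n) Θ.pre ψ) := by
      ext p q
      rfl
    show extendL (Fin n) Θ.post (myReindex E6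
      (ptraceMap ((Fin n × Fin Θ.E) × A0) ((Fin n × Fin Θ.E) × A1)
        (myReindex E5 (myReindex E4 (extendL (Fin m) M (Matrix.vecMulVec u' (star u'))))))) = _
    rw [hC0, hC1, hC2, Superchannel.app, ← extendL_comp, ← extendL_comp,
      LinearMap.comp_assoc]

end Aux6
/-- The dephasing hypothesis-testing relative entropy of coherence is
monotone under DISC superchannels: `C_{H,Δ}^ε(Θ[N]) ≤ C_{H,Δ}^ε(N)`. -/
theorem stmt11 {a0 a1 b0 b1 : ℕ}
    (N : QChanMap (Fin a0) (Fin a1)) (hN : IsCPTP N)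
    (ε : ℝ) (hε0 : 0 ≤ ε) (hε1 : ε ≤ 1)
    (Θ : Superchannel (Fin a0) (Fin a1) (Fin b0) (Fin b1)) (hΘ : IsDISC Θ) :
    CHD ε (Θ.app N) ≤ CHD ε N := by
  classical
  show HentChan ε (Θ.app N) (dephChan (Θ.app N)) ≤ HentChan ε N (dephChan N)
  rw [hΘ N]
  have hcpdeph : CompletelyPositive (dephChan N) :=
    cp_comp cp_dephasingMap (cp_comp hN.1 cp_dephasingMap)
  have htpdeph : TracePreserving (dephChan N) :=
    tp_comp tp_dephasingMap (tp_comp hN.2 tp_dephasingMap)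
  rcases Nat.eq_zero_or_pos a0 with ha0 | ha0
  · -- degenerate case: zero-dimensional input forces `b0 = 0`
    have hb0 : b0 = 0 := by
      have h := Θ.pre_cptp.2 (1 : Matrix (Fin b0) (Fin b0) ℂ)
      rw [Matrix.trace_one] at h
      have h0 : (Θ.pre 1).trace = 0 := by
        subst ha0
        simp [Matrix.trace]
      rw [h0] at h
      have := h.symm
      rw [Fintype.card_fin] at this
      exact_mod_cast this
    have hempty : ∀ (k c : ℕ), c = 0 →
        IsEmpty {ρ : Matrix (Fin k × Fin c) (Fin k × Fin c) ℂ // IsPureState ρ} := by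
      intro k c hc
      subst hc
      constructor
      rintro ⟨ρ, hρ⟩
      have h1 := hρ.1.2
      have h0 : ρ.trace = 0 := by simp [Matrix.trace]
      rw [h0] at h1
      simp at h1
    have hL : HentChan ε (Θ.app N) (Θ.app (dephChan N)) ≤ 0 := by
      refine Real.iSup_le (fun k => ?_) le_rfl
      have := hempty k b0 hb0
      rw [Real.iSup_of_isEmpty]
    have hR : 0 ≤ HentChan ε N (dephChan N) := by
      refine Real.iSup_nonneg fun k => ?_
      have := hempty k a0 ha0
      rw [Real.iSup_of_isEmpty]
    linarith
  · have ha1 : 0 < a1 := by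
      by_contra hcon
      have ha1' : a1 = 0 := Nat.le_zero.mp (Nat.not_lt.mp hcon)
      have htr := hN.2 (1 : Matrix (Fin a0) (Fin a0) ℂ)
      rw [Matrix.trace_one] at htr
      have h0 : (N 1).trace = 0 := by
        subst ha1'
        simp [Matrix.trace]
      rw [h0, Fintype.card_fin] at htr
      have : (a0 : ℂ) = 0 := htr.symm
      have : a0 = 0 := by exact_mod_cast this
      omega
    rcases eq_or_lt_of_le hε1 with hε1' | hε1'
    · -- ε = 1 : all quantities vanish
      subst hε1'
      have hL : HentChan 1 (Θ.app N) (Θ.app (dephChan N)) ≤ 0 := by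
        refine Real.iSup_le (fun k => Real.iSup_le (fun ψ => ?_) le_rfl) le_rfl
        have hσpsd : (extendL (Fin k) (Θ.app (dephChan N)) ψ.1).PosSemidef := by
          have hcpapp : CompletelyPositive (Θ.app (dephChan N)) :=
            cp_comp Θ.post_cptp.1 (cp_comp (cp_extendL hcpdeph (Fin Θ.E)) Θ.pre_cptp.1)
          exact hcpapp k ψ.1 ψ.2.1.1
        exact le_of_eq (hent_eps_one hσpsd)
      have hR : 0 ≤ HentChan 1 N (dephChan N) := by
        refine Real.iSup_nonneg fun k => Real.iSup_nonneg fun ψ => ?_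
        have hσpsd : (extendL (Fin k) (dephChan N) ψ.1).PosSemidef :=
          hcpdeph k ψ.1 ψ.2.1.1
        exact ge_of_eq (hent_eps_one hσpsd)
      linarith
    · -- main case : 0 ≤ ε < 1 and positive dimensions
      set lam : ℝ := (a0 : ℝ) * (a1 : ℝ) with hlamdef
      have hlam : 0 < lam := mul_pos (by exact_mod_cast ha0) (by exact_mod_cast ha1)
      have hcast : ((lam : ℝ) : ℂ)
          = ((Fintype.card (Fin a0) : ℂ)) * ((Fintype.card (Fin a1) : ℂ)) := by
        rw [hlamdef]
        push_cast [Fintype.card_fin]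
        ring
      set c : ℝ := (1 - ε) / lam with hcdef
      have hc : 0 < c := div_pos (by linarith) hlam
      set B : ℝ := - Real.logb 2 c with hBdef
      -- uniform facts about reference-extended states of `N`
      have hfacts : ∀ (k : ℕ) (Φ : Matrix (Fin k × Fin a0) (Fin k × Fin a0) ℂ),
          Φ.PosSemidef → Φ.trace = 1 →
          ((extendL (Fin k) N Φ).PosSemidef ∧ (extendL (Fin k) N Φ).trace = 1)
          ∧ ((extendL (Fin k) (dephChan N) Φ).PosSemidef
              ∧ (extendL (Fin k) (dephChan N) Φ).trace = 1)
          ∧ (((lam : ℂ)) • extendL (Fin k) (dephChan N) Φ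
              - extendL (Fin k) N Φ).PosSemidef := by
        intro k Φ hpsd htr
        refine ⟨⟨hN.1 k Φ hpsd, ?_⟩, ⟨hcpdeph k Φ hpsd, ?_⟩, ?_⟩
        · rw [tp_extendL (Fin k) hN.2 Φ, htr]
        · rw [tp_extendL (Fin k) htpdeph Φ, htr]
        · rw [hcast]
          exact dom_deph hN.1 (Fin k) hpsd
      -- upper bound for all the terms of the right-hand supremum
      have hterm_le : ∀ (k : ℕ)
          (ψ : {ρ : Matrix (Fin k × Fin a0) (Fin k × Fin a0) ℂ // IsPureState ρ}),
          Hent ε (extendL (Fin k) N ψ.1) (extendL (Fin k) (dephChan N) ψ.1) ≤ B := by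
        intro k ψ
        obtain ⟨⟨_, hρt⟩, ⟨_, hσt⟩, hdom⟩ := hfacts k ψ.1 ψ.2.1.1 ψ.2.1.2
        rw [hBdef, hcdef]
        exact hent_le_bound hε0 hε1' hlam hρt hσt hdom
      have hbdd_inner : ∀ k : ℕ, BddAbove (Set.range
          (fun ψ : {ρ : Matrix (Fin k × Fin a0) (Fin k × Fin a0) ℂ // IsPureState ρ} =>
            Hent ε (extendL (Fin k) N ψ.1) (extendL (Fin k) (dephChan N) ψ.1))) := by
        intro k
        refine ⟨B, ?_⟩
        rintro x ⟨ψ, rfl⟩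
        exact hterm_le k ψ
      have hbdd_outer : BddAbove (Set.range (fun k : ℕ =>
          ⨆ ψ : {ρ : Matrix (Fin k × Fin a0) (Fin k × Fin a0) ℂ // IsPureState ρ},
            Hent ε (extendL (Fin k) N ψ.1) (extendL (Fin k) (dephChan N) ψ.1))) := by
        refine ⟨max B 0, ?_⟩
        rintro x ⟨k, rfl⟩
        exact Real.iSup_le (fun ψ => (hterm_le k ψ).trans (le_max_left _ _))
          (le_max_right _ _)
      have hRHS0 : 0 ≤ HentChan ε N (dephChan N) := by
        refine Real.iSup_nonneg fun k => Real.iSup_nonneg fun ψ => ?_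
        obtain ⟨⟨hρp, hρt⟩, ⟨hσp, hσt⟩, _⟩ := hfacts k ψ.1 ψ.2.1.1 ψ.2.1.2
        exact hent_nonneg hε0 hσp hρt hσt
      refine Real.iSup_le (fun n => Real.iSup_le (fun ψ => ?_) hRHS0) hRHS0
      -- dilation of the superchannel action
      obtain ⟨m, Ψ', Λ, hpure', hΛcp, hΛtp, hact⟩ := superchannel_dilation Θ n ψ.2
      obtain ⟨⟨hρp, hρt⟩, ⟨hσp, hσt⟩, hdom⟩ := hfacts m Ψ' hpure'.1.1 hpure'.1.2
      have hlb : ∀ x ∈ testSet ε (extendL (Fin m) N Ψ')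
          (extendL (Fin m) (dephChan N) Ψ'), c ≤ x := by
        intro x hx
        rw [hcdef]
        exact testSet_lb hlam hdom x hx
      calc Hent ε (extendL (Fin n) (Θ.app N) ψ.1)
            (extendL (Fin n) (Θ.app (dephChan N)) ψ.1)
          = Hent ε (Λ (extendL (Fin m) N Ψ')) (Λ (extendL (Fin m) (dephChan N) Ψ')) := by
            rw [hact N, hact (dephChan N)]
        _ ≤ Hent ε (extendL (Fin m) N Ψ') (extendL (Fin m) (dephChan N) Ψ') :=
            hent_mono hΛcp hΛtp hρp hρt hσp hσt hε0 hc hlb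
        _ ≤ ⨆ ψ' : {ρ : Matrix (Fin m × Fin a0) (Fin m × Fin a0) ℂ // IsPureState ρ},
              Hent ε (extendL (Fin m) N ψ'.1) (extendL (Fin m) (dephChan N) ψ'.1) :=
            le_ciSup (hbdd_inner m) ⟨Ψ', hpure'⟩
        _ ≤ HentChan ε N (dephChan N) := le_ciSup hbdd_outer m


end DynCoh
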